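/- Let V be a ℚ-algebra and let k be a positive integer. Let π₀, π₁, …, πₙ be idempotents in V such that πᵢ·πⱼ = 0 whenever i − j < k and i ≠ j. For each i define pᵢ := (1 − ½πₙ)·(1 − ½π₍ₙ₋₁₎)⋯(1 − ½π₍ᵢ₊₁₎) · πᵢ · (1 − ½π₍ᵢ₋₁₎)⋯(1 − ½π₁)·(1 − ½π₀). Then each pᵢ is idempotent, and pᵢ·pⱼ = 0 whenever i − j < k + 1 and i ≠ j. -/

import Mathlib

/-- One step of the non-commutative Gram–Schmidt process:
`gs n π i = (1 − ½πₙ)⋯(1 − ½π₍ᵢ₊₁₎) · πᵢ · (1 − ½π₍ᵢ₋₁₎)⋯(1 − ½π₀)`,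
where the factors in each product are taken with decreasing index from left to right. -/
def gs {V : Type*} [Ring V] [Algebra ℚ V] (n : ℕ) (π : ℕ → V) (i : ℕ) : V :=
  (((List.range (n - i)).map (fun k => (1 : V) - ((2 : ℚ)⁻¹) • π (n - k))).prod)
    * π i *
  (((List.range i).map (fun k => (1 : V) - ((2 : ℚ)⁻¹) • π (i - 1 - k))).prod)

section GSaux

variable {V : Type*} [Ring V] [Algebra ℚ V]

/-- The basic factor `1 - ½ πₘ`. -/
private def uu (π : ℕ → V) (m : ℕ) : V := 1 - (2 : ℚ)⁻¹ • π m

/-- `hh π j m = u_{j+m} ⋯ u_{j+1} * π j`. -/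
private def hh (π : ℕ → V) (j : ℕ) : ℕ → V
  | 0 => π j
  | m + 1 => uu π (j + m + 1) * hh π j m

/-- `gg π i m = π i * u_{i-1} ⋯ u_{i-m}`. -/
private def gg (π : ℕ → V) (i : ℕ) : ℕ → V
  | 0 => π i
  | m + 1 => gg π i m * uu π (i - m - 1)

private lemma hmul (π : ℕ → V) (b : ℕ) (x y : V) :
    x * (uu π b * y) = x * y - (2 : ℚ)⁻¹ • (x * (π b * y)) := by
  rw [uu, sub_mul, one_mul, smul_mul_assoc, mul_sub, mul_smul_comm]

private lemma gmul (π : ℕ → V) (b : ℕ) (x y : V) :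
    (x * uu π b) * y = x * y - (2 : ℚ)⁻¹ • (x * (π b * y)) := by
  rw [mul_assoc, hmul]

private lemma H1 (n k : ℕ) (π : ℕ → V)
    (hidem : ∀ i, i ≤ n → π i * π i = π i)
    (horth' : ∀ a b, a ≤ n → b ≤ n → a ≠ b → a < b + k → π a * π b = 0)
    (j : ℕ) (hj : j ≤ n) : ∀ m, j + m ≤ n → π j * hh π j m = π j := by
  intro m
  induction m with
  | zero => intro _; exact hidem j hj
  | succ m ih =>
    intro hm
    simp only [hh]
    rw [hmul, ← mul_assoc, horth' j (j + m + 1) hj (by omega) (by omega) (by omega),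
      zero_mul, smul_zero, sub_zero, ih (by omega)]

private lemma H2 (n k : ℕ) (π : ℕ → V)
    (hidem : ∀ i, i ≤ n → π i * π i = π i)
    (horth' : ∀ a b, a ≤ n → b ≤ n → a ≠ b → a < b + k → π a * π b = 0)
    (a j : ℕ) (ha : a ≤ n) (hj : j ≤ n) (haj : a ≠ j) (hak : a < j + k) :
    ∀ m, j + m ≤ n → π a * hh π j m = 0 := by
  intro m
  induction m with
  | zero => intro _; exact horth' a j ha hj haj hak
  | succ m ih =>
    intro hm
    simp only [hh]
    rw [hmul, ← mul_assoc]
    by_cases hc : a = j + m + 1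
    · rw [← hc, hidem a ha, ih (by omega), smul_zero, sub_zero]
    · rw [horth' a (j + m + 1) ha (by omega) hc (by omega), zero_mul, smul_zero, sub_zero,
        ih (by omega)]

private lemma H3 (n k : ℕ) (hk : 0 < k) (π : ℕ → V)
    (hidem : ∀ i, i ≤ n → π i * π i = π i)
    (horth' : ∀ a b, a ≤ n → b ≤ n → a ≠ b → a < b + k → π a * π b = 0)
    (j : ℕ) (hjk : j + k ≤ n) :
    ∀ m, j + m ≤ n →
      π (j + k) * hh π j m = (if m < k then (1 : ℚ) else (2 : ℚ)⁻¹) • (π (j + k) * π j) := by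
  intro m
  induction m with
  | zero =>
    intro _
    simp only [hh]
    rw [if_pos hk, one_smul]
  | succ m ih =>
    intro hm
    simp only [hh]
    rw [hmul, ← mul_assoc]
    by_cases hc : m + 1 = k
    · have h1 : j + m + 1 = j + k := by omega
      rw [h1, hidem (j + k) (by omega), ih (by omega), if_pos (by omega), one_smul,
        if_neg (by omega)]
      module
    · rw [horth' (j + k) (j + m + 1) (by omega) (by omega) (by omega) (by omega),
        zero_mul, smul_zero, sub_zero, ih (by omega)]
      by_cases hm2 : m + 1 < k
      · rw [if_pos (by omega : m < k), if_pos hm2]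
      · rw [if_neg (by omega : ¬ m < k), if_neg hm2]

private lemma core (n k : ℕ) (hk : 0 < k) (π : ℕ → V)
    (hidem : ∀ i, i ≤ n → π i * π i = π i)
    (horth' : ∀ a b, a ≤ n → b ≤ n → a ≠ b → a < b + k → π a * π b = 0)
    (i j : ℕ) (hi : i ≤ n) (hj : j ≤ n) (hij : i ≤ j + k) :
    gg π i i * hh π j (n - j) = if i = j then π i else 0 := by
  have hπjH : π j * hh π j (n - j) = π j :=
    H1 n k π hidem horth' j hj (n - j) (by omega)
  have hbH : ∀ b, b ≤ n → b ≠ j → b < j + k → π b * hh π j (n - j) = 0 :=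
    fun b hb h1 h2 => H2 n k π hidem horth' b j hb hj h1 h2 (n - j) (by omega)
  by_cases hle : i ≤ j
  · have L1 : ∀ m, m ≤ i → gg π i m * hh π j (n - j) = π i * hh π j (n - j) := by
      intro m
      induction m with
      | zero => intro _; simp only [gg]
      | succ m ih =>
        intro hm
        simp only [gg]
        rw [gmul, hbH (i - m - 1) (by omega) (by omega) (by omega), mul_zero, smul_zero,
          sub_zero, ih (by omega)]
    rcases eq_or_lt_of_le hle with heq | hlt
    · rw [if_pos heq, L1 i le_rfl, heq, hπjH]
    · rw [if_neg (by omega), L1 i le_rfl, hbH i hi (by omega) (by omega)]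
  · rw [if_neg (by omega)]
    have hji : j < i := by omega
    have L2 : ∀ m, m ≤ i - j - 1 →
        gg π i m * π j = π i * π j ∧
        gg π i m * hh π j (n - j) = π i * hh π j (n - j) := by
      intro m
      induction m with
      | zero => intro _; constructor <;> simp only [gg]
      | succ m ih =>
        intro hm
        have hb1 : π (i - m - 1) * π j = 0 :=
          horth' _ j (by omega) hj (by omega) (by omega)
        have hb2 : π (i - m - 1) * hh π j (n - j) = 0 :=
          hbH _ (by omega) (by omega) (by omega)
        constructor
        · simp only [gg]
          rw [gmul, hb1, mul_zero, smul_zero, sub_zero, (ih (by omega)).1]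
        · simp only [gg]
          rw [gmul, hb2, mul_zero, smul_zero, sub_zero, (ih (by omega)).2]
    have key : gg π i (i - j) * hh π j (n - j) = 0 := by
      have hd : i - j = (i - j - 1) + 1 := by omega
      rw [hd]
      simp only [gg]
      rw [gmul, (show i - (i - j - 1) - 1 = j by omega), hπjH,
        (L2 (i - j - 1) le_rfl).2, (L2 (i - j - 1) le_rfl).1]
      by_cases hik : i = j + k
      · have h3 : π (j + k) * hh π j (n - j) = (2 : ℚ)⁻¹ • (π (j + k) * π j) := by
          rw [H3 n k hk π hidem horth' j (by omega) (n - j) (by omega), if_neg (by omega)]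
        rw [hik, h3]
        exact sub_self _
      · rw [hbH i hi (by omega) (by omega), horth' i j hi hj (by omega) (by omega),
          smul_zero, sub_zero]
    have L3 : ∀ m, i - j ≤ m → m ≤ i → gg π i m * hh π j (n - j) = 0 := by
      intro m
      induction m with
      | zero => intro h1 _; omega
      | succ m ih =>
        intro h1 h2
        by_cases hc : i - j ≤ m
        · simp only [gg]
          rw [gmul, hbH (i - m - 1) (by omega) (by omega) (by omega), mul_zero, smul_zero,
            sub_zero, ih hc (by omega)]
        · rw [(show m + 1 = i - j by omega), key]
    exact L3 i (by omega) le_rfl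

private lemma list_hh (π : ℕ → V) (j : ℕ) :
    ∀ m, (((List.range m).map (fun t => uu π (j + m - t))).prod) * π j = hh π j m := by
  intro m
  induction m with
  | zero => simp [hh]
  | succ m ih =>
    rw [List.range_succ_eq_map, List.map_cons, List.prod_cons, List.map_map, mul_assoc]
    have h2 : ((List.range m).map ((fun t => uu π (j + (m + 1) - t)) ∘ (· + 1))).prod
        = ((List.range m).map (fun t => uu π (j + m - t))).prod := by
      congr 1
      apply List.map_congr_left
      intro t _
      simp only [Function.comp_apply]
      congr 1
      omega
    rw [h2, ih]
    simp only [hh]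
    have h0 : j + (m + 1) - 0 = j + m + 1 := by omega
    rw [h0]

private lemma list_gg (π : ℕ → V) (i : ℕ) :
    ∀ m, π i * (((List.range m).map (fun t => uu π (i - 1 - t))).prod) = gg π i m := by
  intro m
  induction m with
  | zero => simp [gg]
  | succ m ih =>
    rw [List.range_succ, List.map_append, List.prod_append, List.map_cons, List.map_nil,
      List.prod_cons, List.prod_nil, mul_one, ← mul_assoc, ih]
    simp only [gg]
    have h0 : i - 1 - m = i - m - 1 := by omega
    rw [h0]

set_option linter.unusedSectionVars false in
private lemma four (a b c d : V) : (a * b) * (c * d) = a * ((b * c) * d) := by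
  simp only [mul_assoc]

end GSaux

/-- Non-commutative Gram–Schmidt (Lemma `linalg` of the paper): if `π₀, …, πₙ` are
idempotents with `πᵢ·πⱼ = 0` whenever `i − j < k` and `i ≠ j`, then the elements
`pᵢ := (1 − ½πₙ)⋯(1 − ½π₍ᵢ₊₁₎)·πᵢ·(1 − ½π₍ᵢ₋₁₎)⋯(1 − ½π₀)` are idempotents with
`pᵢ·pⱼ = 0` whenever `i − j < k + 1` and `i ≠ j`. -/
theorem stmt_0 {V : Type*} [Ring V] [Algebra ℚ V] (n k : ℕ) (hk : 0 < k) (π : ℕ → V)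
    (hidem : ∀ i, i ≤ n → π i * π i = π i)
    (horth : ∀ i j, i ≤ n → j ≤ n → i ≠ j → (i : ℤ) - (j : ℤ) < (k : ℤ) →
      π i * π j = 0) :
    (∀ i, i ≤ n → gs n π i * gs n π i = gs n π i) ∧
    (∀ i j, i ≤ n → j ≤ n → i ≠ j → (i : ℤ) - (j : ℤ) < (k : ℤ) + 1 →
      gs n π i * gs n π j = 0) := by
  have horth' : ∀ a b, a ≤ n → b ≤ n → a ≠ b → a < b + k → π a * π b = 0 := by
    intro a b ha hb hab h
    exact horth a b ha hb hab (by omega)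
  -- rewrite `gs` in the two convenient associated forms
  have e1 : ∀ i, gs n π i
      = (((List.range (n - i)).map (fun t => (1 : V) - ((2 : ℚ)⁻¹) • π (n - t))).prod)
        * gg π i i := by
    intro i
    unfold gs
    rw [mul_assoc]
    congr 1
    exact list_gg π i i
  have e2 : ∀ j, j ≤ n → gs n π j
      = hh π j (n - j)
        * (((List.range j).map (fun t => (1 : V) - ((2 : ℚ)⁻¹) • π (j - 1 - t))).prod) := by
    intro j hj
    unfold gs
    congr 1
    have hfun : (fun t => (1 : V) - ((2 : ℚ)⁻¹) • π (n - t))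
        = (fun t => uu π (j + (n - j) - t)) := by
      funext t
      rw [(show j + (n - j) = n by omega)]
      rfl
    rw [hfun]
    exact list_hh π j (n - j)
  constructor
  · intro i hi
    have h := core n k hk π hidem horth' i i hi hi (by omega)
    rw [if_pos rfl] at h
    have h12 := congrArg₂ (· * ·) (e1 i) (e2 i hi)
    rw [h12, four, h, ← mul_assoc]
    rfl
  · intro i j hi hj hij hlt
    have h := core n k hk π hidem horth' i j hi hj (by omega)
    rw [if_neg hij] at h
    have h12 := congrArg₂ (· * ·) (e1 i) (e2 j hj)
    rw [h12, four, h, zero_mul, mul_zero]
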